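/- arXiv:2005.10131 — 4 statements merged into one kernel-verified Lean document; each statement's English description precedes it below -/
import Mathlib

section
/- Without the C-compatibility hypothesis, the can-explain relation ⪰_C is not transitive: there exist acyclic causal models with focus N1, N2, N3 such that N1 ⪰_C N2 and N2 ⪰_C N3 but not N1 ⪰_C N3. -/
open scoped Classical

/-- A causal model with focus: exogenous variables `U`, endogenous variables `V`,
range function `R`, structural equations `F` (the value of an endogenous variable
given the values of all other variables), and focus function `G`. -/
structure CModel where
  U : Set ℕ
  V : Set ℕ
  R : ℕ → Set ℕ
  F : ℕ → (ℕ → ℕ) → ℕ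
  G : ℕ → Set ℕ

namespace CModel

def vars (M : CModel) : Set ℕ := M.U ∪ M.V

/-- A context: an assignment giving each exogenous variable a value in its range. -/
def Ctx (M : CModel) (u : ℕ → ℕ) : Prop := ∀ v ∈ M.U, u v ∈ M.R v

/-- `s` solves the equations of `M` in context `u` under the intervention setting
the variables in `X` to the values given by `x`. -/
def solves (M : CModel) (u : ℕ → ℕ) (X : Set ℕ) (x : ℕ → ℕ) (s : ℕ → ℕ) : Prop :=
  (∀ v ∈ X, s v = x v) ∧ (∀ v ∈ M.U, v ∉ X → s v = u v) ∧
  (∀ v ∈ M.V, v ∉ X → s v = M.F v s)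

/-- `(M,u) ⊨ [X ← x](C = c)`. -/
def sat (M : CModel) (u : ℕ → ℕ) (X : Set ℕ) (x : ℕ → ℕ) (C c : ℕ) : Prop :=
  ∃ s, solves M u X x s ∧ s C = c

/-- `B` is a parent of `C`: some change in `B`'s value (holding all others fixed)
changes `C`'s value. -/
def isParent (M : CModel) (B C : ℕ) : Prop :=
  B ≠ C ∧ B ∈ vars M ∧ C ∈ M.V ∧
  ∃ s b1 b2, b1 ∈ M.R B ∧ b2 ∈ M.R B ∧
    M.F C (Function.update s B b1) ≠ M.F C (Function.update s B b2)

def Par (M : CModel) (C : ℕ) : Set ℕ := {B | isParent M B C}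

/-- Acyclicity: the parent graph has no directed cycle. -/
def Acyclic (M : CModel) : Prop :=
  ∀ v, ¬ Relation.TransGen (fun a b => isParent M a b) v v

/-- Well-formedness of a causal model with focus. -/
def WF (M : CModel) : Prop :=
  M.U.Finite ∧ M.V.Finite ∧ M.U.Nonempty ∧ M.V.Nonempty ∧ Disjoint M.U M.V ∧
  (∀ v ∈ vars M, (M.R v).Finite ∧ 1 < (M.R v).ncard) ∧
  (∀ C, C ∉ M.G C) ∧ (∀ C ∈ vars M, M.G C ⊆ vars M) ∧
  (∀ C ∈ M.V, Par M C ⊆ M.G C)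

/-- `M1 ⪰_C M2`: `M1` can explain `M2` with respect to `C`. -/
def canExplain (M1 M2 : CModel) (C : ℕ) : Prop :=
  M1.R C = M2.R C ∧ M2.G C ⊆ M1.G C ∧
  ∀ u2 x c, Ctx M2 u2 → (∀ v ∈ M2.G C, x v ∈ M2.R v) →
    sat M2 u2 (M2.G C) x C c →
    ∃ u1, Ctx M1 u1 ∧ sat M1 u1 (M2.G C) x C c

/-- Compatibility: for every shared variable, one model can explain the other. -/
def compatible (M1 M2 : CModel) : Prop :=
  ∀ C ∈ vars M1 ∩ vars M2, canExplain M1 M2 C ∨ canExplain M2 M1 C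

/-- `M1 ≡_C M2`: the two models agree on `C`'s status, range, focus set, and
(if endogenous) structural equation. -/
def equivC (M1 M2 : CModel) (C : ℕ) : Prop :=
  (C ∈ M1.U ∧ C ∈ M2.U ∧ M1.R C = M2.R C ∧ M1.G C = M2.G C) ∨
  (C ∈ M1.V ∧ C ∈ M2.V ∧ M1.R C = M2.R C ∧ M1.G C = M2.G C ∧
    Par M1 C = Par M2 C ∧ (∀ D ∈ Par M1 C, M1.R D = M2.R D) ∧
    (∀ p c u1 u2, Ctx M1 u1 → Ctx M2 u2 →
      (sat M1 u1 (Par M1 C) p C c ↔ sat M2 u2 (Par M2 C) p C c)))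

/-- The combined model takes `C`'s data from `M1` iff `C` appears in `M1` and
either does not appear in `M2` or `M1` dominates on `C`. -/
def take1 (M1 M2 : CModel) (C : ℕ) : Prop :=
  C ∈ vars M1 ∧ (C ∉ vars M2 ∨ canExplain M1 M2 C)

/-- The combination `M1 ⊕' M2`. -/
noncomputable def combine (M1 M2 : CModel) : CModel where
  U := {C | (take1 M1 M2 C ∧ C ∈ M1.U) ∨ (¬ take1 M1 M2 C ∧ C ∈ M2.U)}
  V := {C | (take1 M1 M2 C ∧ C ∈ M1.V) ∨ (¬ take1 M1 M2 C ∧ C ∈ M2.V)}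
  R := fun C => if take1 M1 M2 C then M1.R C else M2.R C
  F := fun C => if take1 M1 M2 C then M1.F C else M2.F C
  G := fun C => if take1 M1 M2 C then M1.G C else M2.G C

/-- Model equality: same variable sets and `≡_C` for every variable. -/
def mequiv (M1 M2 : CModel) : Prop :=
  M1.U = M2.U ∧ M1.V = M2.V ∧ ∀ C ∈ vars M1, equivC M1 M2 C

/-- Dominance: `M1 ⪰ M2` iff `M1 ⪰_C M2` for every variable `C` of `M2`. -/
def dominates (M1 M2 : CModel) : Prop :=
  ∀ C ∈ vars M2, canExplain M1 M2 C

end CModel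

open CModel

/-! ### Auxiliary constructions for the counterexample -/

noncomputable def NN1 : CModel where
  U := {3}
  V := {0, 1, 2}
  R := fun _ => {0, 1}
  F := fun v s => if v = 2 then (if s 0 = s 1 then 0 else 1)
      else if v = 0 ∨ v = 1 then s 3 else 0
  G := fun v => if v = 2 then {0, 1} else if v = 0 ∨ v = 1 then {3} else ∅

noncomputable def NN2 : CModel where
  U := {0, 1}
  V := {2}
  R := fun _ => {0, 1}
  F := fun v s => if v = 2 then (if s 0 = s 1 then 0 else 1) else 0
  G := fun v => if v = 2 then {0, 1} else ∅

noncomputable def NN3 : CModel where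
  U := {2, 3}
  V := {0, 1}
  R := fun _ => {0, 1}
  F := fun v s => if v = 0 ∨ v = 1 then s 3 else 0
  G := fun v => if v = 0 ∨ v = 1 then {3} else ∅

lemma aux_acyclic {M : CModel} (f : ℕ → ℕ)
    (h : ∀ a b, isParent M a b → f a < f b) : Acyclic M := by
  intro v hv
  have key : ∀ a b, Relation.TransGen (fun a b => isParent M a b) a b → f a < f b := by
    intro a b h'
    induction h' with
    | single hr => exact h _ _ hr
    | tail _ hr ih => exact ih.trans (h _ _ hr)
  exact lt_irrefl _ (key v v hv)

lemma parent_NN1 {B C : ℕ} (h : isParent NN1 B C) :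
    ((C = 0 ∨ C = 1) ∧ B = 3) ∨ (C = 2 ∧ (B = 0 ∨ B = 1)) := by
  obtain ⟨hBC, hBv, hCV, s, b1, b2, -, -, hne⟩ := h
  have hCV' : C = 0 ∨ C = 1 ∨ C = 2 := by
    simpa [NN1, Set.mem_insert_iff] using hCV
  rcases hCV' with rfl | rfl | rfl
  · left; refine ⟨Or.inl rfl, ?_⟩
    by_contra hB3
    apply hne
    simp [NN1, Function.update_of_ne (Ne.symm hB3)]
  · left; refine ⟨Or.inr rfl, ?_⟩
    by_contra hB3
    apply hne
    simp [NN1, Function.update_of_ne (Ne.symm hB3)]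
  · right; refine ⟨rfl, ?_⟩
    by_contra hB
    push_neg at hB
    apply hne
    simp [NN1, Function.update_of_ne (Ne.symm hB.1), Function.update_of_ne (Ne.symm hB.2)]

lemma parent_NN2 {B C : ℕ} (h : isParent NN2 B C) :
    C = 2 ∧ (B = 0 ∨ B = 1) := by
  obtain ⟨hBC, hBv, hCV, s, b1, b2, -, -, hne⟩ := h
  have hC : C = 2 := by simpa [NN2] using hCV
  subst hC
  refine ⟨rfl, ?_⟩
  by_contra hB
  push_neg at hB
  apply hne
  simp [NN2, Function.update_of_ne (Ne.symm hB.1), Function.update_of_ne (Ne.symm hB.2)]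

lemma parent_NN3 {B C : ℕ} (h : isParent NN3 B C) :
    (C = 0 ∨ C = 1) ∧ B = 3 := by
  obtain ⟨hBC, hBv, hCV, s, b1, b2, -, -, hne⟩ := h
  have hCV' : C = 0 ∨ C = 1 := by simpa [NN3, Set.mem_insert_iff] using hCV
  refine ⟨hCV', ?_⟩
  by_contra hB3
  apply hne
  rcases hCV' with rfl | rfl <;> simp [NN3, Function.update_of_ne (Ne.symm hB3)]

lemma range_wf : ∀ (v : ℕ), (({0, 1} : Set ℕ)).Finite ∧ 1 < (({0, 1} : Set ℕ)).ncard := by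
  intro v
  constructor
  · exact (Set.finite_singleton 1).insert 0
  · rw [Set.ncard_pair (by norm_num)]
    norm_num

lemma wf_NN1 : WF NN1 := by
  refine ⟨?_, ?_, ⟨3, rfl⟩, ⟨0, by simp [NN1]⟩, ?_, ?_, ?_, ?_, ?_⟩
  · exact Set.finite_singleton 3
  · exact Set.Finite.insert _ (Set.Finite.insert _ (Set.finite_singleton 2))
  · simp [NN1, Set.disjoint_left]
  · intro v _; exact range_wf v
  · intro C
    by_cases h2 : C = 2
    · subst h2; simp [NN1]
    · by_cases h01 : C = 0 ∨ C = 1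
      · rcases h01 with rfl | rfl <;> simp [NN1]
      · simp [NN1, h2, h01]
  · intro C hC
    have : C = 0 ∨ C = 1 ∨ C = 2 ∨ C = 3 := by
      simpa [NN1, vars, Set.mem_insert_iff] using hC
    rcases this with rfl | rfl | rfl | rfl <;>
      simp [NN1, vars, Set.subset_def, Set.mem_insert_iff] <;> tauto
  · intro C hC B hB
    have h := parent_NN1 hB
    rcases h with ⟨hC', rfl⟩ | ⟨rfl, hB'⟩
    · rcases hC' with rfl | rfl <;> simp [NN1]
    · rcases hB' with rfl | rfl <;> simp [NN1]

lemma wf_NN2 : WF NN2 := by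
  refine ⟨?_, ?_, ⟨0, by simp [NN2]⟩, ⟨2, rfl⟩, ?_, ?_, ?_, ?_, ?_⟩
  · exact Set.Finite.insert _ (Set.finite_singleton 1)
  · exact Set.finite_singleton 2
  · simp [NN2, Set.disjoint_left]
  · intro v _; exact range_wf v
  · intro C
    by_cases h2 : C = 2
    · subst h2; simp [NN2]
    · simp [NN2, h2]
  · intro C hC
    have : C = 2 ∨ C = 0 ∨ C = 1 := by
      simpa [NN2, vars, Set.mem_insert_iff] using hC
    rcases this with rfl | rfl | rfl <;>
      first | tauto | simp [NN2, vars, Set.subset_def, Set.mem_insert_iff] <;> tauto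
  · intro C hC B hB
    obtain ⟨rfl, hB'⟩ := parent_NN2 hB
    rcases hB' with rfl | rfl <;> simp [NN2]

lemma wf_NN3 : WF NN3 := by
  refine ⟨?_, ?_, ⟨2, by simp [NN3]⟩, ⟨0, by simp [NN3]⟩, ?_, ?_, ?_, ?_, ?_⟩
  · exact Set.Finite.insert _ (Set.finite_singleton 3)
  · exact Set.Finite.insert _ (Set.finite_singleton 1)
  · simp [NN3, Set.disjoint_left]
  · intro v _; exact range_wf v
  · intro C
    by_cases h01 : C = 0 ∨ C = 1
    · rcases h01 with rfl | rfl <;> simp [NN3]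
    · simp [NN3, h01]
  · intro C hC
    have : C = 0 ∨ C = 1 ∨ C = 2 ∨ C = 3 := by
      simpa [NN3, vars, Set.mem_insert_iff] using hC
    rcases this with rfl | rfl | rfl | rfl <;>
      simp [NN3, vars, Set.subset_def, Set.mem_insert_iff] <;> tauto
  · intro C hC B hB
    obtain ⟨hC', rfl⟩ := parent_NN3 hB
    rcases hC' with rfl | rfl <;> simp only [NN3] <;> norm_num

lemma ce12 : canExplain NN1 NN2 2 := by
  refine ⟨rfl, by simp [NN1, NN2], ?_⟩
  intro u2 x c hu2 hx ⟨s, ⟨hX, hU, hV⟩, hC⟩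
  have hs0 : s 0 = x 0 := hX 0 (by simp [NN2])
  have hs1 : s 1 = x 1 := hX 1 (by simp [NN2])
  have hG2 : NN2.G 2 = ({0, 1} : Set ℕ) := by simp [NN2]
  rw [hG2] at hX hU hV
  have hs2 : s 2 = if s 0 = s 1 then 0 else 1 := by
    have := hV 2 (by simp [NN2]) (by norm_num)
    simpa [NN2] using this
  refine ⟨fun _ => 0, ?_, ?_⟩
  · intro v hv; simp [NN1]
  · refine ⟨fun v => if v = 0 then x 0 else if v = 1 then x 1 else if v = 2 then c else 0,
      ⟨?_, ?_, ?_⟩, by norm_num⟩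
    · rw [hG2]
      intro v hv
      rcases (by simpa [Set.mem_insert_iff] using hv : v = 0 ∨ v = 1) with rfl | rfl <;> simp
    · rw [hG2]
      intro v hv hvn
      have : v = 3 := by simpa [NN1] using hv
      subst this; simp
    · rw [hG2]
      intro v hv hvn
      have hv' : v = 0 ∨ v = 1 ∨ v = 2 := by simpa [NN1, Set.mem_insert_iff] using hv
      rcases hv' with rfl | rfl | rfl
      · exact absurd (by simp) hvn
      · exact absurd (by simp) hvn
      · simp only [if_neg (by norm_num : (2:ℕ) ≠ 0), if_neg (by norm_num : (2:ℕ) ≠ 1),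
          if_pos rfl]
        rw [← hC, hs2, hs0, hs1]
        simp [NN1]

lemma ce23 : canExplain NN2 NN3 2 := by
  refine ⟨rfl, by simp [NN2, NN3], ?_⟩
  intro u3 x c hu3 hx ⟨s, ⟨hX, hU, hV⟩, hC⟩
  have hG3 : NN3.G 2 = (∅ : Set ℕ) := by simp [NN3]
  rw [hG3] at hX hU hV
  have hs2 : s 2 = u3 2 := hU 2 (by simp [NN3]) (by simp)
  have hc : c ∈ ({0, 1} : Set ℕ) := by
    rw [← hC, hs2]
    exact hu3 2 (by simp [NN3])
  refine ⟨fun v => if v = 0 then c else 0, ?_, ?_⟩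
  · intro v hv
    have : v = 0 ∨ v = 1 := by simpa [NN2, Set.mem_insert_iff] using hv
    rcases this with rfl | rfl
    · simpa [NN2] using hc
    · simp [NN2]
  · refine ⟨fun v => if v = 1 ∨ v = 3 then 0 else c, ⟨?_, ?_, ?_⟩, by norm_num⟩
    · rw [hG3]; intro v hv; exact absurd hv (Set.notMem_empty v)
    · rw [hG3]
      intro v hv _
      have : v = 0 ∨ v = 1 := by simpa [NN2, Set.mem_insert_iff] using hv
      rcases this with rfl | rfl <;> norm_num
    · rw [hG3]
      intro v hv _
      have : v = 2 := by simpa [NN2] using hv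
      subst this
      have hcc : c = 0 ∨ c = 1 := by simpa [Set.mem_insert_iff] using hc
      rcases hcc with rfl | rfl <;> norm_num [NN2]

lemma nce13 : ¬ canExplain NN1 NN3 2 := by
  rintro ⟨hR, hG, h⟩
  have hG3 : NN3.G 2 = (∅ : Set ℕ) := by simp [NN3]
  have hsat3 : sat NN3 (fun _ => 1) (NN3.G 2) (fun _ => 0) 2 1 := by
    refine ⟨fun _ => 1, ⟨?_, ?_, ?_⟩, rfl⟩
    · rw [hG3]; intro v hv; exact absurd hv (Set.notMem_empty v)
    · intro v _ _; rfl
    · intro v hv _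
      have : v = 0 ∨ v = 1 := by simpa [NN3, Set.mem_insert_iff] using hv
      rcases this with rfl | rfl <;> simp [NN3]
  obtain ⟨u1, hu1, s, ⟨hX, hU, hV⟩, hC⟩ := h (fun _ => 1) (fun _ => 0) 1
    (by intro v _; simp [NN3]) (by rw [hG3]; intro v hv; exact absurd hv (Set.notMem_empty v)) hsat3
  rw [hG3] at hX hU hV
  have hs0 : s 0 = s 3 := by
    have := hV 0 (by simp [NN1]) (by simp)
    simpa [NN1] using this
  have hs1 : s 1 = s 3 := by
    have := hV 1 (by simp [NN1]) (by simp)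
    simpa [NN1] using this
  have hs2 : s 2 = 0 := by
    have := hV 2 (by simp [NN1]) (by simp)
    rw [this]
    simp [NN1, hs0, hs1]
  rw [hC] at hs2
  exact one_ne_zero hs2


/-- without `C`-compatibility, `⪰_C` is not transitive. -/
theorem canExplain_not_trans : ∃ (N1 N2 N3 : CModel) (C : ℕ),
    WF N1 ∧ WF N2 ∧ WF N3 ∧ Acyclic N1 ∧ Acyclic N2 ∧ Acyclic N3 ∧
    canExplain N1 N2 C ∧ canExplain N2 N3 C ∧ ¬ canExplain N1 N3 C := by
  refine ⟨NN1, NN2, NN3, 2, wf_NN1, wf_NN2, wf_NN3, ?_, ?_, ?_, ce12, ce23, nce13⟩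
  · exact aux_acyclic (fun v => if v = 3 then 0 else if v = 2 then 2 else 1)
      (by intro a b h
          rcases parent_NN1 h with ⟨hb, rfl⟩ | ⟨rfl, ha⟩
          · rcases hb with rfl | rfl <;> norm_num
          · rcases ha with rfl | rfl <;> norm_num)
  · exact aux_acyclic (fun v => if v = 2 then 1 else 0)
      (by intro a b h
          obtain ⟨rfl, ha⟩ := parent_NN2 h
          rcases ha with rfl | rfl <;> norm_num)
  · exact aux_acyclic (fun v => if v = 3 then 0 else 1)
      (by intro a b h
          obtain ⟨hb, rfl⟩ := parent_NN3 h
          rcases hb with rfl | rfl <;> norm_num)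
end

section
/- There exist two acyclic causal models with focus M1 and M2 that are compatible but whose combination M1 ⊕' M2 is cyclic. Concretely: with four binary variables A, B, C, D, let M1 have exogenous {A, C}, endogenous {B, D}, equations B = A and D = C; let M2 have exogenous {B, D}, endogenous {A, C}, equations A = D and C = B; then M1 and M2 are compatible, both are acyclic, but the parent graph of M1 ⊕' M2 contains the cycle A → B → C → D → A. -/
open scoped Classical

open CModel

namespace CycleEx

open CModel

noncomputable def Mone : CModel where
  U := {0, 2}
  V := {1, 3}
  R := fun _ => {0, 1}
  F := fun v s => if v = 1 then s 0 else if v = 3 then s 2 else 0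
  G := fun v => if v = 1 then {0} else if v = 3 then {2} else ∅

noncomputable def Mtwo : CModel where
  U := {1, 3}
  V := {0, 2}
  R := fun _ => {0, 1}
  F := fun v s => if v = 0 then s 3 else if v = 2 then s 1 else 0
  G := fun v => if v = 0 then {3} else if v = 2 then {1} else ∅

lemma G1_0 : Mone.G 0 = ∅ := rfl
lemma G1_1 : Mone.G 1 = {0} := rfl
lemma G2_1 : Mtwo.G 1 = ∅ := rfl

lemma par1 : ∀ a b, isParent Mone a b → (a = 0 ∧ b = 1) ∨ (a = 2 ∧ b = 3) := by
  rintro a b ⟨hab, -, hb, s, b1, b2, -, -, hne⟩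
  have hb' : b = 1 ∨ b = 3 := hb
  rcases hb' with rfl | rfl
  · refine Or.inl ⟨?_, rfl⟩
    by_contra ha
    exact hne (by simp [Mone, Function.update_of_ne (fun h => ha h.symm)])
  · refine Or.inr ⟨?_, rfl⟩
    by_contra ha
    exact hne (by simp [Mone, Function.update_of_ne (fun h => ha h.symm)])

lemma par2 : ∀ a b, isParent Mtwo a b → (a = 3 ∧ b = 0) ∨ (a = 1 ∧ b = 2) := by
  rintro a b ⟨hab, -, hb, s, b1, b2, -, -, hne⟩
  have hb' : b = 0 ∨ b = 2 := hb
  rcases hb' with rfl | rfl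
  · refine Or.inl ⟨?_, rfl⟩
    by_contra ha
    exact hne (by simp [Mtwo, Function.update_of_ne (fun h => ha h.symm)])
  · refine Or.inr ⟨?_, rfl⟩
    by_contra ha
    exact hne (by simp [Mtwo, Function.update_of_ne (fun h => ha h.symm)])

lemma acy1 : Acyclic Mone := by
  intro v hv
  have key : ∀ a b, Relation.TransGen (fun a b => isParent Mone a b) a b →
      (a = 0 ∧ b = 1) ∨ (a = 2 ∧ b = 3) := by
    intro a b h
    induction h with
    | single h => exact par1 _ _ h
    | tail h1 h2 ih =>
        rcases ih with ⟨-, rfl⟩ | ⟨-, rfl⟩ <;>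
          rcases par1 _ _ h2 with ⟨h, -⟩ | ⟨h, -⟩ <;> omega
  rcases key v v hv with ⟨rfl, h⟩ | ⟨rfl, h⟩ <;> omega

lemma acy2 : Acyclic Mtwo := by
  intro v hv
  have key : ∀ a b, Relation.TransGen (fun a b => isParent Mtwo a b) a b →
      (a = 3 ∧ b = 0) ∨ (a = 1 ∧ b = 2) := by
    intro a b h
    induction h with
    | single h => exact par2 _ _ h
    | tail h1 h2 ih =>
        rcases ih with ⟨-, rfl⟩ | ⟨-, rfl⟩ <;>
          rcases par2 _ _ h2 with ⟨h, -⟩ | ⟨h, -⟩ <;> omega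
  rcases key v v hv with ⟨rfl, h⟩ | ⟨rfl, h⟩ <;> omega

lemma wf1 : WF Mone := by
  refine ⟨show ({0,2}:Set ℕ).Finite from Set.toFinite _,
    show ({1,3}:Set ℕ).Finite from Set.toFinite _, ⟨0, Or.inl rfl⟩, ⟨1, Or.inl rfl⟩, ?_, ?_, ?_, ?_, ?_⟩
  · rw [Set.disjoint_left]
    rintro a ha hb
    rcases ha with rfl | ha <;> rcases hb with hb | hb <;> simp_all
  · intro v _
    refine ⟨show ({0,1}:Set ℕ).Finite from Set.toFinite _, ?_⟩
    rw [show Mone.R v = {0, 1} from rfl, Set.ncard_pair (by omega)]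
    omega
  · intro C h
    simp only [Mone] at h
    split_ifs at h with h1 h2 <;> simp_all
  · intro C _ y hy
    simp only [Mone] at hy
    split_ifs at hy with h1 h2 <;> simp_all [vars, Mone]
  · intro C hC B hB
    rcases par1 B C hB with ⟨rfl, rfl⟩ | ⟨rfl, rfl⟩ <;> simp [Mone]

lemma wf2 : WF Mtwo := by
  refine ⟨show ({1,3}:Set ℕ).Finite from Set.toFinite _,
    show ({0,2}:Set ℕ).Finite from Set.toFinite _, ⟨1, Or.inl rfl⟩, ⟨0, Or.inl rfl⟩, ?_, ?_, ?_, ?_, ?_⟩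
  · rw [Set.disjoint_left]
    rintro a ha hb
    rcases ha with rfl | ha <;> rcases hb with hb | hb <;> simp_all
  · intro v _
    refine ⟨show ({0,1}:Set ℕ).Finite from Set.toFinite _, ?_⟩
    rw [show Mtwo.R v = {0, 1} from rfl, Set.ncard_pair (by omega)]
    omega
  · intro C h
    simp only [Mtwo] at h
    split_ifs at h with h1 h2 <;> simp_all
  · intro C _ y hy
    simp only [Mtwo] at hy
    split_ifs at hy with h1 h2 <;> simp_all [vars, Mtwo]
  · intro C hC B hB
    rcases par2 B C hB with ⟨rfl, rfl⟩ | ⟨rfl, rfl⟩ <;> simp [Mtwo]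

lemma ceB : canExplain Mone Mtwo 1 := by
  refine ⟨rfl, by simp [Mone, Mtwo], ?_⟩
  rintro u2 x c hu2 - ⟨s, ⟨-, hU, -⟩, rfl⟩
  have h1 : s 1 = u2 1 := hU 1 (Or.inl rfl) (by simp [Mtwo])
  have hc : u2 1 ∈ ({0, 1} : Set ℕ) := hu2 1 (Or.inl rfl)
  refine ⟨fun _ => s 1, fun v _ => h1 ▸ hc, fun _ => s 1, ⟨?_, fun v _ _ => rfl, ?_⟩, rfl⟩
  · intro v hv; exact absurd hv (by simp [Mtwo])
  · rintro v hv -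
    have hv' : v = 1 ∨ v = 3 := hv
    rcases hv' with rfl | rfl <;> rfl

lemma ceD : canExplain Mone Mtwo 3 := by
  refine ⟨rfl, by simp [Mone, Mtwo], ?_⟩
  rintro u2 x c hu2 - ⟨s, ⟨-, hU, -⟩, rfl⟩
  have h1 : s 3 = u2 3 := hU 3 (Or.inr rfl) (by simp [Mtwo])
  have hc : u2 3 ∈ ({0, 1} : Set ℕ) := hu2 3 (Or.inr rfl)
  refine ⟨fun _ => s 3, fun v _ => h1 ▸ hc, fun _ => s 3, ⟨?_, fun v _ _ => rfl, ?_⟩, rfl⟩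
  · intro v hv; exact absurd hv (by simp [Mtwo])
  · rintro v hv -
    have hv' : v = 1 ∨ v = 3 := hv
    rcases hv' with rfl | rfl <;> rfl

lemma ceA : canExplain Mtwo Mone 0 := by
  refine ⟨rfl, by simp [Mone, Mtwo], ?_⟩
  rintro u1 x c hu1 - ⟨s, ⟨-, hU, -⟩, rfl⟩
  have h1 : s 0 = u1 0 := hU 0 (Or.inl rfl) (by simp [Mone])
  have hc : u1 0 ∈ ({0, 1} : Set ℕ) := hu1 0 (Or.inl rfl)
  refine ⟨fun _ => s 0, fun v _ => h1 ▸ hc, fun _ => s 0, ⟨?_, fun v _ _ => rfl, ?_⟩, rfl⟩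
  · intro v hv; exact absurd hv (by simp [Mone])
  · rintro v hv -
    have hv' : v = 0 ∨ v = 2 := hv
    rcases hv' with rfl | rfl <;> rfl

lemma ceC : canExplain Mtwo Mone 2 := by
  refine ⟨rfl, by simp [Mone, Mtwo], ?_⟩
  rintro u1 x c hu1 - ⟨s, ⟨-, hU, -⟩, rfl⟩
  have h1 : s 2 = u1 2 := hU 2 (Or.inr rfl) (by simp [Mone])
  have hc : u1 2 ∈ ({0, 1} : Set ℕ) := hu1 2 (Or.inr rfl)
  refine ⟨fun _ => s 2, fun v _ => h1 ▸ hc, fun _ => s 2, ⟨?_, fun v _ _ => rfl, ?_⟩, rfl⟩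
  · intro v hv; exact absurd hv (by simp [Mone])
  · rintro v hv -
    have hv' : v = 0 ∨ v = 2 := hv
    rcases hv' with rfl | rfl <;> rfl

lemma nceA : ¬ canExplain Mone Mtwo 0 := by
  rintro ⟨-, hsub, -⟩
  have := hsub (show (3 : ℕ) ∈ Mtwo.G 0 by simp [Mtwo])
  simp [Mone] at this

lemma nceC : ¬ canExplain Mone Mtwo 2 := by
  rintro ⟨-, hsub, -⟩
  have := hsub (show (1 : ℕ) ∈ Mtwo.G 2 by simp [Mtwo])
  simp [Mone] at this

lemma compat : compatible Mone Mtwo := by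
  rintro C ⟨hC, -⟩
  have hC' : C = 0 ∨ C = 2 ∨ C = 1 ∨ C = 3 := by
    rcases hC with h | h <;> rcases h with h | h <;> simp_all
  rcases hC' with rfl | rfl | rfl | rfl
  · exact Or.inr ceA
  · exact Or.inr ceC
  · exact Or.inl ceB
  · exact Or.inl ceD

lemma t1B : take1 Mone Mtwo 1 := ⟨Or.inr (Or.inl rfl), Or.inr ceB⟩
lemma t1D : take1 Mone Mtwo 3 := ⟨Or.inr (Or.inr rfl), Or.inr ceD⟩

lemma nt1A : ¬ take1 Mone Mtwo 0 := by
  rintro ⟨-, h | h⟩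
  · exact h (Or.inr (Or.inl rfl))
  · exact nceA h

lemma nt1C : ¬ take1 Mone Mtwo 2 := by
  rintro ⟨-, h | h⟩
  · exact h (Or.inr (Or.inr rfl))
  · exact nceC h

lemma McV : ∀ v, v = 0 ∨ v = 1 ∨ v = 2 ∨ v = 3 → v ∈ (combine Mone Mtwo).V := by
  rintro v (rfl | rfl | rfl | rfl)
  · exact Or.inr ⟨nt1A, Or.inl rfl⟩
  · exact Or.inl ⟨t1B, Or.inl rfl⟩
  · exact Or.inr ⟨nt1C, Or.inr rfl⟩
  · exact Or.inl ⟨t1D, Or.inr rfl⟩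

lemma McR : ∀ v, (combine Mone Mtwo).R v = {0, 1} := by
  intro v
  simp only [combine]
  split <;> rfl

lemma McF1 : (combine Mone Mtwo).F 1 = Mone.F 1 := if_pos t1B
lemma McF3 : (combine Mone Mtwo).F 3 = Mone.F 3 := if_pos t1D
lemma McF0 : (combine Mone Mtwo).F 0 = Mtwo.F 0 := if_neg nt1A
lemma McF2 : (combine Mone Mtwo).F 2 = Mtwo.F 2 := if_neg nt1C

lemma edge01 : isParent (combine Mone Mtwo) 0 1 := by
  refine ⟨by omega, Or.inr (McV 0 (by omega)), McV 1 (by omega),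
    fun _ => 0, 0, 1, ?_, ?_, ?_⟩
  · rw [McR]; exact Or.inl rfl
  · rw [McR]; exact Or.inr rfl
  · rw [McF1]; simp [Mone]

lemma edge12 : isParent (combine Mone Mtwo) 1 2 := by
  refine ⟨by omega, Or.inr (McV 1 (by omega)), McV 2 (by omega),
    fun _ => 0, 0, 1, ?_, ?_, ?_⟩
  · rw [McR]; exact Or.inl rfl
  · rw [McR]; exact Or.inr rfl
  · rw [McF2]; simp [Mtwo]

lemma edge23 : isParent (combine Mone Mtwo) 2 3 := by
  refine ⟨by omega, Or.inr (McV 2 (by omega)), McV 3 (by omega),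
    fun _ => 0, 0, 1, ?_, ?_, ?_⟩
  · rw [McR]; exact Or.inl rfl
  · rw [McR]; exact Or.inr rfl
  · rw [McF3]; simp [Mone]

lemma edge30 : isParent (combine Mone Mtwo) 3 0 := by
  refine ⟨by omega, Or.inr (McV 3 (by omega)), McV 0 (by omega),
    fun _ => 0, 0, 1, ?_, ?_, ?_⟩
  · rw [McR]; exact Or.inl rfl
  · rw [McR]; exact Or.inr rfl
  · rw [McF0]; simp [Mtwo]

lemma cyc : Relation.TransGen (fun a b => isParent (combine Mone Mtwo) a b) 0 0 :=
  (((Relation.TransGen.single edge01).tail edge12).tail edge23).tail edge30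

end CycleEx

open CycleEx

/-- two compatible acyclic models whose combination is cyclic. -/
theorem combine_can_be_cyclic : ∃ (M1 M2 : CModel) (A B C D : ℕ),
    A ≠ B ∧ A ≠ C ∧ A ≠ D ∧ B ≠ C ∧ B ≠ D ∧ C ≠ D ∧
    WF M1 ∧ WF M2 ∧ Acyclic M1 ∧ Acyclic M2 ∧ compatible M1 M2 ∧
    M1.U = {A, C} ∧ M1.V = {B, D} ∧ M2.U = {B, D} ∧ M2.V = {A, C} ∧
    (∀ v ∈ ({A, B, C, D} : Set ℕ), M1.R v = {0, 1} ∧ M2.R v = {0, 1}) ∧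
    M1.G A = ∅ ∧ M1.G C = ∅ ∧ M2.G B = ∅ ∧ M2.G D = ∅ ∧
    M1.G B = {A} ∧ M1.G D = {C} ∧ M2.G A = {D} ∧ M2.G C = {B} ∧
    (∀ s, M1.F B s = s A ∧ M1.F D s = s C ∧ M2.F A s = s D ∧ M2.F C s = s B) ∧
    Relation.TransGen (fun a b => isParent (combine M1 M2) a b) A A ∧
    ¬ Acyclic (combine M1 M2) := by
  refine ⟨Mone, Mtwo, 0, 1, 2, 3, by omega, by omega, by omega, by omega, by omega,
    by omega, wf1, wf2, acy1, acy2, compat, rfl, rfl, rfl, rfl,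
    fun v _ => ⟨rfl, rfl⟩, rfl, rfl, rfl, rfl, rfl, rfl, rfl, rfl,
    fun s => ⟨rfl, rfl, rfl, rfl⟩, cyc, fun h => h 0 cyc⟩
end

section
/- The sufficient acyclicity condition is not necessary: there exist compatible acyclic models M1 and M2 such that the union of their parent graphs contains a directed cycle, yet M1 ⊕' M2 is acyclic. -/
open scoped Classical

open CModel

/-! ### Auxiliary construction -/

noncomputable def A1 : CModel where
  U := {0}
  V := {1, 2}
  R := fun _ => {0, 1}
  F := fun C s => if C = 1 then s 0 else s 1
  G := fun C => if C = 0 then ∅ else if C = 1 then {0, 2} else if C = 2 then {0, 1} else ∅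

noncomputable def A2 : CModel where
  U := {0}
  V := {1, 2}
  R := fun _ => {0, 1}
  F := fun C s => if C = 1 then s 2 else s 0
  G := fun C => if C = 1 then {2} else if C = 2 then {0} else ∅

lemma A1_F_char {B C : ℕ} (hC : C = 1 ∨ C = 2) (s : ℕ → ℕ) (b1 b2 : ℕ)
    (hF : A1.F C (Function.update s B b1) ≠ A1.F C (Function.update s B b2)) :
    (B = 0 ∧ C = 1) ∨ (B = 1 ∧ C = 2) := by
  rcases hC with rfl | rfl
  · refine Or.inl ⟨?_, rfl⟩
    by_contra hB
    exact hF (by simp [A1, Function.update_of_ne (Ne.symm hB)])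
  · refine Or.inr ⟨?_, rfl⟩
    by_contra hB
    exact hF (by simp [A1, Function.update_of_ne (Ne.symm hB)])

lemma A1_par {B C : ℕ} (h : isParent A1 B C) :
    (B = 0 ∧ C = 1) ∨ (B = 1 ∧ C = 2) := by
  obtain ⟨_, _, hC, s, b1, b2, _, _, hF⟩ := h
  have hC' : C = 1 ∨ C = 2 := by simpa [A1] using hC
  exact A1_F_char hC' s b1 b2 hF

lemma A2_par {B C : ℕ} (h : isParent A2 B C) :
    (B = 2 ∧ C = 1) ∨ (B = 0 ∧ C = 2) := by
  obtain ⟨_, _, hC, s, b1, b2, _, _, hF⟩ := h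
  have hC' : C = 1 ∨ C = 2 := by simpa [A2] using hC
  rcases hC' with rfl | rfl
  · refine Or.inl ⟨?_, rfl⟩
    by_contra hB
    exact hF (by simp [A2, Function.update_of_ne (Ne.symm hB)])
  · refine Or.inr ⟨?_, rfl⟩
    by_contra hB
    exact hF (by simp [A2, Function.update_of_ne (Ne.symm hB)])

lemma acyclic_of_rank (r : ℕ → ℕ → Prop) (f : ℕ → ℕ)
    (h : ∀ a b, r a b → f a < f b) : ∀ v, ¬ Relation.TransGen r v v := by
  have key : ∀ a b, Relation.TransGen r a b → f a < f b := by
    intro a b hab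
    induction hab with
    | single h' => exact h _ _ h'
    | tail _ h' ih => exact ih.trans (h _ _ h')
  exact fun v hv => lt_irrefl _ (key v v hv)

lemma A1_acyclic : Acyclic A1 :=
  acyclic_of_rank _ id (by
    intro a b hab
    rcases A1_par hab with ⟨rfl, rfl⟩ | ⟨rfl, rfl⟩ <;> norm_num)

lemma A2_acyclic : Acyclic A2 :=
  acyclic_of_rank _ (fun n => if n = 0 then 0 else if n = 2 then 1 else 2) (by
    intro a b hab
    rcases A2_par hab with ⟨rfl, rfl⟩ | ⟨rfl, rfl⟩ <;> norm_num)

lemma A1_wf : WF A1 := by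
  refine ⟨Set.finite_singleton 0, (Set.finite_singleton 2).insert 1,
    ⟨0, rfl⟩, ⟨1, by simp [A1]⟩, ?_, ?_, ?_, ?_, ?_⟩
  · rw [Set.disjoint_left]
    intro a ha hb
    simp [A1] at ha hb
    omega
  · intro v hv
    refine ⟨(Set.finite_singleton 1).insert 0, ?_⟩
    show 1 < ({0,1} : Set ℕ).ncard
    rw [Set.ncard_pair (by norm_num : (0:ℕ) ≠ 1)]
    norm_num
  · intro C
    simp only [A1]
    split_ifs with h0 h1 h2 <;> simp_all
  · intro C hC
    simp only [A1]
    split_ifs with h0 h1 h2 <;>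
      simp_all [vars, A1, Set.subset_def]
  · intro C hC B hB
    rcases A1_par hB with ⟨rfl, rfl⟩ | ⟨rfl, rfl⟩ <;> simp [A1]

lemma A2_wf : WF A2 := by
  refine ⟨Set.finite_singleton 0, (Set.finite_singleton 2).insert 1,
    ⟨0, rfl⟩, ⟨1, by simp [A2]⟩, ?_, ?_, ?_, ?_, ?_⟩
  · rw [Set.disjoint_left]
    intro a ha hb
    simp [A2] at ha hb
    omega
  · intro v hv
    refine ⟨(Set.finite_singleton 1).insert 0, ?_⟩
    show 1 < ({0,1} : Set ℕ).ncard
    rw [Set.ncard_pair (by norm_num : (0:ℕ) ≠ 1)]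
    norm_num
  · intro C
    simp only [A2]
    split_ifs with h1 h2 <;> simp_all
  · intro C hC
    simp only [A2]
    split_ifs with h1 h2 <;>
      simp_all [vars, A2, Set.subset_def]
  · intro C hC B hB
    rcases A2_par hB with ⟨rfl, rfl⟩ | ⟨rfl, rfl⟩ <;> simp [A2]

lemma ce0 : canExplain A1 A2 0 := by
  refine ⟨rfl, by simp [A1, A2], ?_⟩
  intro u2 x c hu2 hx hsat
  obtain ⟨s, ⟨hX, hU, hV⟩, hsC⟩ := hsat
  have h0 : s 0 = u2 0 := hU 0 (by simp [A2]) (by simp [A2])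
  have hc : c = u2 0 := by rw [← hsC, h0]
  have hcR : c ∈ ({0, 1} : Set ℕ) := by
    rw [hc]; exact hu2 0 (by simp [A2])
  refine ⟨fun _ => c, fun v hv => by simpa [A1] using hcR,
    fun _ => c, ⟨?_, ?_, ?_⟩, rfl⟩
  · intro v hv; simp [A2] at hv
  · intro v hv _; rfl
  · intro v hv _
    simp [A1]

lemma ce1 : canExplain A1 A2 1 := by
  refine ⟨rfl, by simp [A1, A2], ?_⟩
  intro u2 x c hu2 hx hsat
  obtain ⟨s, ⟨hX, hU, hV⟩, hsC⟩ := hsat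
  have h2 : s 2 = x 2 := hX 2 (by simp [A2])
  have h1 : s 1 = x 2 := by
    have := hV 1 (by simp [A2]) (by simp [A2])
    rw [this]; simpa [A2] using h2
  have hc : c = x 2 := by rw [← hsC, h1]
  have hx2 : x 2 ∈ ({0, 1} : Set ℕ) := hx 2 (by simp [A2])
  refine ⟨fun _ => x 2, fun v hv => by simpa [A1] using hx2,
    fun _ => x 2, ⟨?_, ?_, ?_⟩, hc.symm⟩
  · intro v hv
    simp [A2] at hv
    subst hv; rfl
  · intro v hv hvX; rfl
  · intro v hv _
    simp [A1]

lemma ce2 : canExplain A1 A2 2 := by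
  refine ⟨rfl, by simp [A1, A2], ?_⟩
  intro u2 x c hu2 hx hsat
  obtain ⟨s, ⟨hX, hU, hV⟩, hsC⟩ := hsat
  have h0 : s 0 = x 0 := hX 0 (by simp [A2])
  have h2 : s 2 = x 0 := by
    have := hV 2 (by simp [A2]) (by simp [A2])
    rw [this]; simpa [A2] using h0
  have hc : c = x 0 := by rw [← hsC, h2]
  have hx0 : x 0 ∈ ({0, 1} : Set ℕ) := hx 0 (by simp [A2])
  refine ⟨fun _ => x 0, fun v hv => by simpa [A1] using hx0,
    fun _ => x 0, ⟨?_, ?_, ?_⟩, hc.symm⟩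
  · intro v hv
    simp [A2] at hv
    subst hv; rfl
  · intro v hv hvX; rfl
  · intro v hv _
    simp [A1]

lemma ceAll {C : ℕ} (hC : C = 0 ∨ C = 1 ∨ C = 2) : canExplain A1 A2 C := by
  rcases hC with rfl | rfl | rfl
  exacts [ce0, ce1, ce2]

lemma A_compatible : compatible A1 A2 := by
  intro C hC
  have hC' : C = 0 ∨ C = 1 ∨ C = 2 := by
    rcases hC with ⟨h, _⟩
    have := by simpa [vars, A1] using h
    tauto
  exact Or.inl (ceAll hC')

lemma take1_all {C : ℕ} (hC : C = 0 ∨ C = 1 ∨ C = 2) : take1 A1 A2 C := by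
  refine ⟨?_, Or.inr (ceAll hC)⟩
  rcases hC with rfl | rfl | rfl <;> simp [vars, A1]

lemma comb_par {B C : ℕ} (h : isParent (combine A1 A2) B C) :
    (B = 0 ∧ C = 1) ∨ (B = 1 ∧ C = 2) := by
  obtain ⟨_, _, hC, s, b1, b2, _, _, hF⟩ := h
  have hC' : C = 1 ∨ C = 2 := by
    rcases hC with ⟨_, h'⟩ | ⟨_, h'⟩ <;> simpa [A1, A2] using h'
  have ht : take1 A1 A2 C := take1_all (Or.inr hC')
  have hFeq : (combine A1 A2).F C = A1.F C := by
    simp [combine, if_pos ht]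
  rw [hFeq] at hF
  exact A1_F_char hC' s b1 b2 hF

lemma comb_acyclic : Acyclic (combine A1 A2) :=
  acyclic_of_rank _ id (by
    intro a b hab
    rcases comb_par hab with ⟨rfl, rfl⟩ | ⟨rfl, rfl⟩ <;> norm_num)

lemma A1_par_12 : isParent A1 1 2 := by
  refine ⟨by norm_num, by simp [vars, A1], by simp [A1],
    fun _ => 0, 0, 1, by simp [A1], by simp [A1], ?_⟩
  simp [A1]

lemma A2_par_21 : isParent A2 2 1 := by
  refine ⟨by norm_num, by simp [vars, A2], by simp [A2],
    fun _ => 0, 0, 1, by simp [A2], by simp [A2], ?_⟩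
  simp [A2]

/-- the union-graph acyclicity condition is not necessary. -/
theorem union_acyclicity_not_necessary : ∃ (M1 M2 : CModel),
    WF M1 ∧ WF M2 ∧ Acyclic M1 ∧ Acyclic M2 ∧ compatible M1 M2 ∧
    (∃ v, Relation.TransGen (fun a b => isParent M1 a b ∨ isParent M2 a b) v v) ∧
    Acyclic (combine M1 M2) := by
  refine ⟨A1, A2, A1_wf, A2_wf, A1_acyclic, A2_acyclic, A_compatible, ⟨1, ?_⟩, comb_acyclic⟩
  exact Relation.TransGen.head (Or.inl A1_par_12)
    (Relation.TransGen.single (Or.inr A2_par_21))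
end

section
/- Determining whether M1 ⪰_C M2 is Π₂ᵖ-hard, even when all variables are binary: for every closed quantified Boolean formula ∀X ∃Y φ, the formula is true if and only if M1 ⪰_C M2, where M2 has exogenous binary variables X and endogenous binary C with constant equation C = true and G2(C) = X, and M1 has exogenous binary variables X ∪ Y, endogenous C with equation C = φ and G1(C) = X ∪ Y. -/
open scoped Classical

open CModel

/-- hardness reduction: the closed QBF (for all X exists Y, phi)
is true iff M1 can explain M2 with respect to C, for the constructed binary models. -/
theorem pi2_hardness_reduction (X Y : Set ℕ) (hXf : X.Finite) (hYf : Y.Finite)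
    (hXY : Disjoint X Y) (hXne : X.Nonempty) (hYne : Y.Nonempty)
    (C : ℕ) (hC : C ∉ X ∪ Y)
    (φ : (ℕ → ℕ) → Bool)
    (hdep : ∀ s t : ℕ → ℕ, (∀ v ∈ X ∪ Y, s v = t v) → φ s = φ t) :
    (∀ x : ℕ → ℕ, (∀ v ∈ X, x v ∈ ({0, 1} : Set ℕ)) →
      ∃ y : ℕ → ℕ, (∀ v ∈ Y, y v ∈ ({0, 1} : Set ℕ)) ∧
        φ (fun v => if v ∈ X then x v else y v) = true) ↔
    canExplain
      ⟨X ∪ Y, {C}, fun _ => {0, 1},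
        fun v s => if v = C then (if φ s then 1 else 0) else 0,
        fun v => if v = C then X ∪ Y else ∅⟩
      ⟨X, {C}, fun _ => {0, 1},
        fun v _ => if v = C then 1 else 0,
        fun v => if v = C then X else ∅⟩
      C := by
  have hCX : C ∉ X := fun h => hC (Or.inl h)
  have hCY : C ∉ Y := fun h => hC (Or.inr h)
  have eG1 : (if C = C then X ∪ Y else (∅ : Set ℕ)) = X ∪ Y := if_pos rfl
  have eG2 : (if C = C then X else (∅ : Set ℕ)) = X := if_pos rfl
  constructor
  · intro hqbf
    refine ⟨rfl, ?_, ?_⟩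
    · dsimp only; rw [eG1, eG2]; exact fun v hv => Or.inl hv
    · intro u2 x c hu2 hx hsat
      dsimp only at hx hsat ⊢
      rw [eG2] at hx hsat ⊢
      -- c must be 1
      obtain ⟨s, ⟨hsx, _, hsv⟩, hsc⟩ := hsat
      have hc1 : c = 1 := by
        have h1 := hsv C rfl hCX
        dsimp only at h1
        rw [if_pos rfl] at h1
        rw [← hsc, h1]
      subst hc1
      obtain ⟨y, hy, hφ⟩ := hqbf x hx
      refine ⟨fun v => if v ∈ X then x v else if v ∈ Y then y v else 0, ?_, ?_⟩
      · intro v hv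
        rcases hv with hv | hv
        · simpa [hv] using hx v hv
        · have hvX : v ∉ X := fun h => hXY.ne_of_mem h hv rfl
          simpa [hvX, hv] using hy v hv
      · refine ⟨fun v => if v = C then 1 else if v ∈ X then x v else y v,
          ⟨?_, ?_, ?_⟩, by simp⟩
        · intro v hv
          have hne : v ≠ C := fun h => hCX (h ▸ hv)
          simp [hne, hv]
        · intro v hv hvX
          rcases hv with hv | hv
          · exact absurd hv hvX
          · have hne : v ≠ C := fun h => hCY (h ▸ hv)
            simp [hne, hvX, hv]
        · intro v hv hvX
          have hvC : v = C := hv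
          subst hvC
          have hsame : φ (fun w => if w = v then 1 else if w ∈ X then x w else y w)
              = φ (fun w => if w ∈ X then x w else y w) := by
            apply hdep
            intro w hw
            have hne : w ≠ v := fun h => hC (h ▸ hw)
            simp [hne]
          dsimp only
          rw [if_pos rfl, if_pos rfl, hsame, hφ]
          simp
  · intro hce x hx
    obtain ⟨_, _, hmain⟩ := hce
    have hsat2 : sat ⟨X, {C}, fun _ => {0, 1},
        fun v _ => if v = C then 1 else 0,
        fun v => if v = C then X else ∅⟩ (fun _ => 0) X x C 1 := by
      refine ⟨fun v => if v ∈ X then x v else if v = C then 1 else 0, ⟨?_, ?_, ?_⟩, ?_⟩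
      · intro v hv; simp [hv]
      · intro v hv hvX; exact absurd hv hvX
      · intro v hv hvX
        have hvC : v = C := hv
        subst hvC
        simp [hvX]
      · simp [hCX]
    have hmain2 := hmain (fun _ => 0) x 1 (fun v _ => by simp) ?_ ?_
    · obtain ⟨u1, hu1, s, ⟨hsx, hsu, hsv⟩, hsc⟩ := hmain2
      replace hsx : ∀ v ∈ X, s v = x v := fun v hv =>
        hsx v (show v ∈ (if C = C then X else (∅ : Set ℕ)) from eG2.symm ▸ hv)
      replace hsu : ∀ v ∈ X ∪ Y, v ∉ X → s v = u1 v := fun v hv hvX =>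
        hsu v hv (fun h => hvX (eG2 ▸ (h : v ∈ (if C = C then X else (∅ : Set ℕ)))))
      replace hsv := hsv C rfl
        (fun h => hCX (eG2 ▸ (h : C ∈ (if C = C then X else (∅ : Set ℕ)))))
      refine ⟨u1, ?_, ?_⟩
      · intro v hv
        exact hu1 v (Or.inr hv)
      · have hFC := hsv
        dsimp only at hFC
        rw [if_pos rfl] at hFC
        have hφs : φ s = true := by
          by_contra h
          rw [hsc] at hFC
          simp only [Bool.not_eq_true] at h
          rw [h] at hFC
          simp at hFC
        have hsame : φ (fun v => if v ∈ X then x v else u1 v) = φ s := by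
          apply hdep
          intro v hv
          rcases hv with hv | hv
          · simp [hv, hsx v hv]
          · have hvX : v ∉ X := fun h => hXY.ne_of_mem h hv rfl
            simp [hvX, hsu v (Or.inr hv) hvX]
        rw [hsame, hφs]
    · dsimp only; rw [eG2]; exact fun v hv => hx v hv
    · dsimp only; rw [eG2]; exact hsat2
end
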